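/- Let Θ be a classical–quantum channel from a finite set 𝒰 to density operators ρ^u_{Y_{[1:L]}} on H_{Y_1}⊗…⊗H_{Y_L}, with input U ∼ P̃_U satisfying Σ_u |P̃_U(u) − 1/|𝒰|| ≤ ε', and let 𝔸 ⊆ 2^{[1:L]}. Suppose there is an ε''-reliable source code for the source U with compound quantum side information (ρ^U_{Y_𝓐})_{𝓐∈𝔸}, consisting of a surjective linear encoder g:𝒰→𝒞 (𝒰, 𝒞 finite vector spaces over a finite field) and decoders h_𝓐 for each 𝓐∈𝔸, i.e., max_{𝓐∈𝔸} Σ_u P̃_U(u) Pr[h_𝓐(ρ^u_{Y_𝓐}, g(u)) ≠ u] ≤ ε''. Then there exists a family of encoders and decoders {Enc_c, {Dec_{c,𝓐}}_{𝓐∈𝔸}}_{c∈𝒞}, with Enc_c : 𝒮 → 𝒰 for a secret set 𝒮 of size |𝒮| = |𝒰|/|𝒞| and Dec_{c,𝓐} a measurement on H_{Y_𝓐} with outcomes in 𝒮, such that max_{𝓐∈𝔸} Σ_{c∈𝒞} |𝒞|^{−1} P̄_e^{c,𝓐} ≤ ε' + ε'', where P̄_e^{c,𝓐} is the error probability Pr[Dec_{c,𝓐}(ρ^{Enc_c(S)}_{Y_𝓐})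 ≠ S] averaged over S uniform on 𝒮. -/

import Mathlib

open scoped Kronecker ComplexOrder
open Matrix

noncomputable section

/-- Total positive-semidefinite square root (junk value `0` if not PSD). -/
noncomputable def psdSqrt {ι : Type*} [Fintype ι] [DecidableEq ι]
    (A : Matrix ι ι ℂ) : Matrix ι ι ℂ :=
  open scoped Classical in
  if h : A.PosSemidef then
    (h.1.eigenvectorUnitary : Matrix ι ι ℂ) * diagonal ((↑) ∘ (√·) ∘ h.1.eigenvalues) *
      (star h.1.eigenvectorUnitary : Matrix ι ι ℂ) else 0

/-- Trace norm ‖A‖₁ = Tr √(A†A). -/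
noncomputable def traceNorm {ι : Type*} [Fintype ι] [DecidableEq ι]
    (A : Matrix ι ι ℂ) : ℝ :=
  ((psdSqrt (Aᴴ * A)).trace).re

/-- Density operator. -/
def IsDensity {ι : Type*} [Fintype ι] [DecidableEq ι] (ρ : Matrix ι ι ℂ) : Prop :=
  ρ.PosSemidef ∧ ρ.trace = 1

/-- Subnormalized state: PSD with trace at most one. -/
def IsSubnormalized {ι : Type*} [Fintype ι] [DecidableEq ι] (ρ : Matrix ι ι ℂ) : Prop :=
  ρ.PosSemidef ∧ (ρ.trace).re ≤ 1

/-- Fidelity F(ρ,σ) = ‖√ρ√σ‖₁². -/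
noncomputable def fidelity {ι : Type*} [Fintype ι] [DecidableEq ι]
    (ρ σ : Matrix ι ι ℂ) : ℝ :=
  (traceNorm (psdSqrt ρ * psdSqrt σ)) ^ 2

/-- Purified distance P(ρ,σ) = √(1 − F(ρ,σ)). -/
noncomputable def purifiedDist {ι : Type*} [Fintype ι] [DecidableEq ι]
    (ρ σ : Matrix ι ι ℂ) : ℝ :=
  Real.sqrt (1 - fidelity ρ σ)

/-- ε-ball of subnormalized states around ρ in purified distance. -/
def pdBall {ι : Type*} [Fintype ι] [DecidableEq ι] (ε : ℝ) (ρ : Matrix ι ι ℂ) :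
    Set (Matrix ι ι ℂ) :=
  {τ | IsSubnormalized τ ∧ purifiedDist ρ τ ≤ ε}

/-- Loewner partial order: A ⊑ B iff B − A is PSD. -/
def loewnerLE {ι : Type*} [Fintype ι] (A B : Matrix ι ι ℂ) : Prop :=
  (B - A).PosSemidef

/-- Conditional min-entropy H_min(A|B)_ρ. -/
noncomputable def Hmin {α β : Type*} [Fintype α] [DecidableEq α] [Fintype β] [DecidableEq β]
    (ρ : Matrix (α × β) (α × β) ℂ) : ℝ :=
  sSup {r : ℝ | ∃ σ : Matrix β β ℂ, IsDensity σ ∧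
    loewnerLE ρ ((((2 : ℝ) ^ (-r) : ℝ) : ℂ) • ((1 : Matrix α α ℂ) ⊗ₖ σ))}

/-- Conditional max-entropy H_max(A|B)_ρ. -/
noncomputable def Hmax {α β : Type*} [Fintype α] [DecidableEq α] [Fintype β] [DecidableEq β]
    (ρ : Matrix (α × β) (α × β) ℂ) : ℝ :=
  sSup {r : ℝ | ∃ σ : Matrix β β ℂ, IsDensity σ ∧
    r = Real.logb 2 (fidelity ρ ((1 : Matrix α α ℂ) ⊗ₖ σ))}

/-- Smooth conditional min-entropy H_min^ε(A|B)_ρ. -/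
noncomputable def smoothHmin {α β : Type*} [Fintype α] [DecidableEq α] [Fintype β] [DecidableEq β]
    (ε : ℝ) (ρ : Matrix (α × β) (α × β) ℂ) : ℝ :=
  sSup {r : ℝ | ∃ τ ∈ pdBall ε ρ, r = Hmin τ}

/-- Smooth conditional max-entropy H_max^ε(A|B)_ρ. -/
noncomputable def smoothHmax {α β : Type*} [Fintype α] [DecidableEq α] [Fintype β] [DecidableEq β]
    (ε : ℝ) (ρ : Matrix (α × β) (α × β) ℂ) : ℝ :=
  sInf {r : ℝ | ∃ τ ∈ pdBall ε ρ, r = Hmax τ}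

/-- A probability distribution on a finite type. -/
def IsProbDist {X : Type*} [Fintype X] (P : X → ℝ) : Prop :=
  (∀ x, 0 ≤ P x) ∧ ∑ x, P x = 1

/-- Configuration of the subsystems of the users in `D`. -/
abbrev SubCfg {L : ℕ} (Y : Fin L → Type*) (D : Finset (Fin L)) : Type _ :=
  ∀ l : {l : Fin L // l ∈ D}, Y l.1

/-- Glue a configuration on `D` with one on its complement. -/
def glue {L : ℕ} {Y : Fin L → Type*} (D : Finset (Fin L))
    (y : SubCfg Y D) (z : ∀ l : {l : Fin L // l ∉ D}, Y l.1) : ∀ l, Y l :=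
  fun l => if h : l ∈ D then y ⟨l, h⟩ else z ⟨l, h⟩

/-- Reduced (marginal) state on the subsystems of the users in `D`,
obtained by partial trace over the complement of `D`. -/
noncomputable def reduceTo {L : ℕ} {Y : Fin L → Type*} [∀ l, Fintype (Y l)]
    [∀ l, DecidableEq (Y l)] (D : Finset (Fin L))
    (M : Matrix (∀ l, Y l) (∀ l, Y l) ℂ) :
    Matrix (SubCfg Y D) (SubCfg Y D) ℂ :=
  fun y y' => ∑ z : ∀ l : {l : Fin L // l ∉ D}, Y l.1, M (glue D y z) (glue D y' z)

/-- The classical–quantum state ψ_{X Y_D} induced by the input distribution `P`,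
the channel `W` and the user set `D`. -/
noncomputable def cqState {X : Type*} [Fintype X] [DecidableEq X]
    {L : ℕ} {Y : Fin L → Type*} [∀ l, Fintype (Y l)] [∀ l, DecidableEq (Y l)]
    (P : X → ℝ) (W : X → Matrix (∀ l, Y l) (∀ l, Y l) ℂ) (D : Finset (Fin L)) :
    Matrix (X × SubCfg Y D) (X × SubCfg Y D) ℂ :=
  fun p q => if p.1 = q.1 then (P p.1 : ℂ) * reduceTo D (W p.1) p.2 q.2 else 0

end

noncomputable section

/-- The classical–quantum state ρ̃_{S Y_D} of a uniform secret together with the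
channel outputs of the users in `D`, for the encoder `Enc`. -/
noncomputable def secretOutState {S : Type*} [Fintype S] [DecidableEq S]
    {X : Type*} {L : ℕ} {Y : Fin L → Type*} [∀ l, Fintype (Y l)] [∀ l, DecidableEq (Y l)]
    (Enc : S → X) (W : X → Matrix (∀ l, Y l) (∀ l, Y l) ℂ) (D : Finset (Fin L)) :
    Matrix (S × SubCfg Y D) (S × SubCfg Y D) ℂ :=
  fun p q => if p.1 = q.1
    then (((Fintype.card S : ℝ)⁻¹ : ℝ) : ℂ) * reduceTo D (W (Enc p.1)) p.2 q.2 else 0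

/-- `Dec` is a POVM (a measurement) with outcomes in `S`. -/
def IsPOVM {S ι : Type*} [Fintype S] [Fintype ι] [DecidableEq ι]
    (Dec : S → Matrix ι ι ℂ) : Prop :=
  (∀ s, (Dec s).PosSemidef) ∧ ∑ s, Dec s = 1

/-- Average probability of error of the decoding measurement `Dec` for the user set `D`,
for a uniformly distributed secret. -/
noncomputable def avgError {S : Type*} [Fintype S] [DecidableEq S]
    {X : Type*} {L : ℕ} {Y : Fin L → Type*} [∀ l, Fintype (Y l)] [∀ l, DecidableEq (Y l)]
    (Enc : S → X) (W : X → Matrix (∀ l, Y l) (∀ l, Y l) ℂ) (D : Finset (Fin L))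
    (Dec : S → Matrix (SubCfg Y D) (SubCfg Y D) ℂ) : ℝ :=
  1 - (Fintype.card S : ℝ)⁻¹ * ∑ s, ((Dec s * reduceTo D (W (Enc s))).trace).re

end

section Aux
open Matrix
open scoped ComplexOrder

lemma psd_trace_re_nonneg {ι : Type*} [Fintype ι] [DecidableEq ι] {A : Matrix ι ι ℂ}
    (hA : A.PosSemidef) : 0 ≤ (A.trace).re := by
  have h : 0 ≤ A.trace := hA.trace_nonneg
  exact (Complex.le_def.mp h).1

open scoped MatrixOrder in
lemma trace_mul_psd_nonneg {ι : Type*} [Fintype ι] [DecidableEq ι] {A B : Matrix ι ι ℂ}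
    (hA : A.PosSemidef) (hB : B.PosSemidef) : 0 ≤ ((A * B).trace).re := by
  obtain ⟨S, rfl⟩ := CStarAlgebra.nonneg_iff_eq_star_mul_self.mp hA.nonneg
  rw [star_eq_conjTranspose, Matrix.mul_assoc, Matrix.trace_mul_comm]
  exact psd_trace_re_nonneg (hB.mul_mul_conjTranspose_same S)

lemma psd_sum {ι n : Type*} [Fintype n] (s : Finset ι) (f : ι → Matrix n n ℂ)
    (hf : ∀ i ∈ s, (f i).PosSemidef) : (∑ i ∈ s, f i).PosSemidef :=
  Finset.sum_induction f _ (fun _ _ ha hb => ha.add hb) Matrix.PosSemidef.zero hf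

lemma sum_fiber {ι U C : Type*} [Fintype ι] [Fintype U] [DecidableEq C]
    {M : Type*} [AddCommMonoid M]
    (φ : U → C) (c : C) (E : ι → U) (hinj : Function.Injective E)
    (hmem : ∀ i, φ (E i) = c) (hsurj : ∀ u, φ u = c → ∃ i, E i = u) (f : U → M) :
    ∑ i, f (E i) = ∑ u ∈ Finset.univ.filter (fun u => φ u = c), f u := by
  refine Finset.sum_bij (fun i _ => E i) ?_ ?_ ?_ ?_
  · intro i _; simp [hmem]
  · intro a _ b _ hab; exact hinj hab
  · intro u hu
    simp only [Finset.mem_filter] at hu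
    obtain ⟨i, hi⟩ := hsurj u hu.2
    exact ⟨i, Finset.mem_univ _, hi⟩
  · intro i _; rfl

end Aux

section GlueAux
open Matrix
variable {L : ℕ} {Y : Fin L → Type*} [∀ l, Fintype (Y l)] [∀ l, DecidableEq (Y l)]
  (D : Finset (Fin L))

omit [∀ l, Fintype (Y l)] [∀ l, DecidableEq (Y l)] in
lemma glue_restrict (w : ∀ l, Y l) :
    glue D (fun l : {l : Fin L // l ∈ D} => w l.1) (fun l : {l : Fin L // l ∉ D} => w l.1) = w := by
  funext l; by_cases h : l ∈ D <;> simp [glue, h]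

/-- glue as an equiv -/
noncomputable def glueEquiv : (SubCfg Y D × ∀ l : {l : Fin L // l ∉ D}, Y l.1) ≃ (∀ l, Y l) where
  toFun p := glue D p.1 p.2
  invFun w := (fun l => w l.1, fun l => w l.1)
  left_inv p := by
    ext l
    · simp [glue, l.2]
    · simp [glue, l.2]
  right_inv w := glue_restrict D w

lemma reduceTo_trace (M : Matrix (∀ l, Y l) (∀ l, Y l) ℂ) :
    (reduceTo D M).trace = M.trace := by
  calc (reduceTo D M).trace
      = ∑ y : SubCfg Y D, ∑ z : ∀ l : {l : Fin L // l ∉ D}, Y l.1,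
          M (glue D y z) (glue D y z) := rfl
    _ = ∑ p : SubCfg Y D × ∀ l : {l : Fin L // l ∉ D}, Y l.1,
          M (glue D p.1 p.2) (glue D p.1 p.2) :=
        (Fintype.sum_prod_type (f := fun p => M (glue D p.1 p.2) (glue D p.1 p.2))).symm
    _ = ∑ w : ∀ l, Y l, M w w := Fintype.sum_equiv (glueEquiv D) _ _ fun p => rfl
    _ = M.trace := rfl

open scoped MatrixOrder in
lemma reduceTo_posSemidef {M : Matrix (∀ l, Y l) (∀ l, Y l) ℂ} (hM : M.PosSemidef) :
    (reduceTo D M).PosSemidef := by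
  obtain ⟨B, hB⟩ : ∃ B : Matrix (∀ l, Y l) (∀ l, Y l) ℂ, M = Bᴴ * B := by
    obtain ⟨S, rfl⟩ := CStarAlgebra.nonneg_iff_eq_star_mul_self.mp hM.nonneg
    exact ⟨S, rfl⟩
  set N : Matrix ((∀ l, Y l) × ∀ l : {l : Fin L // l ∉ D}, Y l.1) (SubCfg Y D) ℂ :=
    fun p y => B p.1 (glue D y p.2) with hN
  have key : reduceTo D M = Nᴴ * N := by
    ext y y'
    simp only [reduceTo, hB, Matrix.mul_apply, Matrix.conjTranspose_apply, hN,
      Fintype.sum_prod_type]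
    rw [Finset.sum_comm]
    exact (Fintype.sum_prod_type (f := fun p : (∀ l, Y l) × (∀ l : {l : Fin L // l ∉ D}, Y l.1) =>
      star (B p.1 (glue D y p.2)) * B p.1 (glue D y' p.2))).symm
  rw [key]
  exact Matrix.posSemidef_conjTranspose_mul_self N

end GlueAux

/-- **Channel coding from source coding with compound quantum side information**
(Lemma 3): from an `ε''`-reliable source code with a linear encoder for an
almost uniform input, one obtains a family of channel encoders/decoders whose
error probability averaged over the family is at most `ε' + ε''`. -/
theorem channel_coding_from_compound_source_coding
    {F : Type*} [Field F] [Fintype F]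
    {U : Type*} [AddCommGroup U] [Module F U] [Fintype U] [DecidableEq U] [Nonempty U]
    {C : Type*} [AddCommGroup C] [Module F C] [Fintype C] [DecidableEq C]
    {L : ℕ} {Y : Fin L → Type*} [∀ l, Fintype (Y l)] [∀ l, DecidableEq (Y l)]
    (Θ : U → Matrix (∀ l, Y l) (∀ l, Y l) ℂ) (hΘ : ∀ u, IsDensity (Θ u))
    (𝔸 : Finset (Finset (Fin L)))
    (Ptil : U → ℝ) (hPtil : IsProbDist Ptil)
    (ε' ε'' : ℝ) (hε' : 0 ≤ ε') (hε'' : 0 ≤ ε'')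
    -- the input is almost uniform
    (huni : ∑ u, |Ptil u - (Fintype.card U : ℝ)⁻¹| ≤ ε')
    -- the source code: a surjective linear encoder and measurements as decoders
    (g : U →ₗ[F] C) (hg : Function.Surjective g)
    (h : ∀ A ∈ 𝔸, C → U → Matrix (SubCfg Y A) (SubCfg Y A) ℂ)
    (hPOVM : ∀ A (hA : A ∈ 𝔸) (c : C),
      (∀ u, (h A hA c u).PosSemidef) ∧ ∑ u, h A hA c u = 1)
    -- ε''-reliability of the source code
    (hrel : ∀ A (hA : A ∈ 𝔸),
      ∑ u, Ptil u * (1 - (((h A hA (g u) u) * reduceTo A (Θ u)).trace).re) ≤ ε'') :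
    ∃ m : ℕ, 0 < m ∧ Fintype.card U = m * Fintype.card C ∧
      ∃ (Enc : C → Fin m → U)
        (Dec : ∀ A ∈ 𝔸, C → Fin m → Matrix (SubCfg Y A) (SubCfg Y A) ℂ),
        -- the decoders are measurements with outcomes in the secret set
        (∀ A (hA : A ∈ 𝔸) (c : C), IsPOVM (Dec A hA c)) ∧
        -- average (over the family, indexed by c) probability of error bound
        (∀ A (hA : A ∈ 𝔸),
          ∑ c, (Fintype.card C : ℝ)⁻¹ * avgError (Enc c) Θ A (Dec A hA c) ≤
            ε' + ε'') := by
  classical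
  haveI : Nonempty (LinearMap.ker g) := ⟨0⟩
  set m := Fintype.card (LinearMap.ker g) with hmdef
  have hm0 : 0 < m := Fintype.card_pos
  -- the encoders: enumerate the fibers of g
  let eK : Fin m ≃ LinearMap.ker g := (Fintype.equivFin (LinearMap.ker g)).symm
  let u0 : C → U := Function.surjInv hg
  have hu0 : ∀ c, g (u0 c) = c := fun c => Function.surjInv_eq hg c
  let Enc : C → Fin m → U := fun c i => u0 c + ((eK i : LinearMap.ker g) : U)
  have hEncg : ∀ c i, g (Enc c i) = c := by
    intro c i
    have hk : g ((eK i : LinearMap.ker g) : U) = 0 := (eK i).2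
    show g (u0 c + ((eK i : LinearMap.ker g) : U)) = c
    rw [map_add, hk, add_zero, hu0]
  have hEncInj : ∀ c, Function.Injective (Enc c) := by
    intro c i j hij
    have h1 : ((eK i : LinearMap.ker g) : U) = ((eK j : LinearMap.ker g) : U) :=
      add_left_cancel hij
    exact eK.injective (Subtype.coe_injective h1)
  have hEncSurj : ∀ (c : C) (u : U), g u = c → ∃ i, Enc c i = u := by
    intro c u hgu
    have hk : u - u0 c ∈ LinearMap.ker g := by
      rw [LinearMap.mem_ker, map_sub, hgu, hu0, sub_self]
    refine ⟨eK.symm ⟨u - u0 c, hk⟩, ?_⟩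
    show u0 c + ((eK (eK.symm ⟨u - u0 c, hk⟩) : LinearMap.ker g) : U) = u
    rw [eK.apply_symm_apply]
    show u0 c + (u - u0 c) = u
    abel
  -- cardinality of the fibers
  have hfib : ∀ c : C, (Finset.univ.filter (fun u => g u = c)).card = m := by
    intro c
    have h1 := sum_fiber g c (Enc c) (hEncInj c) (hEncg c) (hEncSurj c) (fun _ => (1 : ℕ))
    simp only [Finset.sum_const, Finset.card_univ, Fintype.card_fin, smul_eq_mul, mul_one] at h1
    exact h1.symm
  have hcardU : Fintype.card U = m * Fintype.card C := by
    calc Fintype.card U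
        = ∑ c : C, (Finset.univ.filter (fun u => g u = c)).card :=
          Finset.card_eq_sum_card_fiberwise fun u _ => Finset.mem_univ (g u)
      _ = ∑ _c : C, m := by simp [hfib]
      _ = Fintype.card C * m := by
          rw [Finset.sum_const, Finset.card_univ, smul_eq_mul]
      _ = m * Fintype.card C := mul_comm _ _
  -- the decoders
  let s0 : Fin m := ⟨0, hm0⟩
  let Dec : ∀ A ∈ 𝔸, C → Fin m → Matrix (SubCfg Y A) (SubCfg Y A) ℂ :=
    fun A hA c s => h A hA c (Enc c s) +
      if s = s0 then ∑ u ∈ Finset.univ.filter (fun u => ¬ g u = c), h A hA c u else 0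
  refine ⟨m, hm0, hcardU, Enc, Dec, ?_, ?_⟩
  · -- the decoders are POVMs
    intro A hA c
    constructor
    · intro s
      apply ((hPOVM A hA c).1 (Enc c s)).add
      split
      · exact psd_sum _ _ fun u _ => (hPOVM A hA c).1 u
      · exact Matrix.PosSemidef.zero
    · show ∑ s : Fin m, (h A hA c (Enc c s) +
          if s = s0 then ∑ u ∈ Finset.univ.filter (fun u => ¬ g u = c), h A hA c u else 0) = 1
      rw [Finset.sum_add_distrib, Finset.sum_ite_eq' Finset.univ s0
        (fun _ => ∑ u ∈ Finset.univ.filter (fun u => ¬ g u = c), h A hA c u)]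
      simp only [Finset.mem_univ, if_true]
      rw [sum_fiber g c (Enc c) (hEncInj c) (hEncg c) (hEncSurj c) (h A hA c),
        Finset.sum_filter_add_sum_filter_not]
      exact (hPOVM A hA c).2
  · -- the error bound
    intro A hA
    have hρpsd : ∀ u : U, (reduceTo A (Θ u)).PosSemidef :=
      fun u => reduceTo_posSemidef A (hΘ u).1
    have hρtr : ∀ u : U, ((reduceTo A (Θ u)).trace).re = 1 := by
      intro u
      rw [reduceTo_trace, (hΘ u).2, Complex.one_re]
    set e : U → ℝ := fun u => 1 - ((h A hA (g u) u * reduceTo A (Θ u)).trace).re with hedef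
    have hub : ∀ u, ((h A hA (g u) u * reduceTo A (Θ u)).trace).re ≤ 1 := by
      intro u
      have hone : (1 : Matrix (SubCfg Y A) (SubCfg Y A) ℂ) - h A hA (g u) u =
          ∑ v ∈ Finset.univ.erase u, h A hA (g u) v := by
        rw [← (hPOVM A hA (g u)).2, ← Finset.add_sum_erase _ _ (Finset.mem_univ u)]
        abel
      have hpsd1 : ((1 : Matrix (SubCfg Y A) (SubCfg Y A) ℂ) - h A hA (g u) u).PosSemidef := by
        rw [hone]; exact psd_sum _ _ fun v _ => (hPOVM A hA (g u)).1 v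
      have h2 := trace_mul_psd_nonneg hpsd1 (hρpsd u)
      rw [Matrix.sub_mul, Matrix.one_mul, Matrix.trace_sub, Complex.sub_re, hρtr u] at h2
      linarith
    have he0 : ∀ u, 0 ≤ e u := by
      intro u
      have := hub u
      simp only [hedef]
      linarith
    have he1 : ∀ u, e u ≤ 1 := by
      intro u
      have := trace_mul_psd_nonneg ((hPOVM A hA (g u)).1 u) (hρpsd u)
      simp only [hedef]
      linarith
    have hm' : (0 : ℝ) < m := by exact_mod_cast hm0
    -- per-c error bound
    have hAvg : ∀ c, avgError (Enc c) Θ A (Dec A hA c) ≤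
        (m : ℝ)⁻¹ * ∑ i : Fin m, e (Enc c i) := by
      intro c
      have hterm : ∀ s : Fin m, 1 - e (Enc c s) ≤
          ((Dec A hA c s * reduceTo A (Θ (Enc c s))).trace).re := by
        intro s
        have hdec : Dec A hA c s * reduceTo A (Θ (Enc c s)) =
            h A hA c (Enc c s) * reduceTo A (Θ (Enc c s)) +
            (if s = s0 then ∑ u ∈ Finset.univ.filter (fun u => ¬ g u = c), h A hA c u else 0) *
              reduceTo A (Θ (Enc c s)) := by
          rw [← Matrix.add_mul]
        have hex : 0 ≤ (((if s = s0 then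
            ∑ u ∈ Finset.univ.filter (fun u => ¬ g u = c), h A hA c u else 0) *
              reduceTo A (Θ (Enc c s))).trace).re := by
          split
          · exact trace_mul_psd_nonneg (psd_sum _ _ fun u _ => (hPOVM A hA c).1 u)
              (hρpsd (Enc c s))
          · simp
        have h1e : 1 - e (Enc c s) =
            ((h A hA c (Enc c s) * reduceTo A (Θ (Enc c s))).trace).re := by
          simp only [hedef, hEncg c s]
          ring
        rw [h1e, hdec, Matrix.trace_add, Complex.add_re]
        linarith
      have hsumT : ∑ s : Fin m, (1 - e (Enc c s)) ≤
          ∑ s : Fin m, ((Dec A hA c s * reduceTo A (Θ (Enc c s))).trace).re :=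
        Finset.sum_le_sum fun s _ => hterm s
      have expand : ∑ s : Fin m, (1 - e (Enc c s)) = m - ∑ s : Fin m, e (Enc c s) := by
        rw [Finset.sum_sub_distrib]
        simp
      rw [expand] at hsumT
      have hmul := mul_le_mul_of_nonneg_left hsumT (inv_nonneg.mpr hm'.le)
      rw [mul_sub, inv_mul_cancel₀ hm'.ne'] at hmul
      show 1 - (Fintype.card (Fin m) : ℝ)⁻¹ *
          ∑ s : Fin m, ((Dec A hA c s * reduceTo A (Θ (Enc c s))).trace).re ≤
          (m : ℝ)⁻¹ * ∑ i : Fin m, e (Enc c i)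
      rw [Fintype.card_fin]
      linarith
    -- summing over the family
    have hCpos : (0 : ℝ) ≤ (Fintype.card C : ℝ)⁻¹ := by positivity
    calc ∑ c : C, (Fintype.card C : ℝ)⁻¹ * avgError (Enc c) Θ A (Dec A hA c)
        ≤ ∑ c : C, (Fintype.card C : ℝ)⁻¹ * ((m : ℝ)⁻¹ * ∑ i : Fin m, e (Enc c i)) :=
          Finset.sum_le_sum fun c _ => mul_le_mul_of_nonneg_left (hAvg c) hCpos
      _ = (Fintype.card U : ℝ)⁻¹ * ∑ u : U, e u := by
          have h1 : ∀ c : C, ∑ i : Fin m, e (Enc c i) =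
              ∑ u ∈ Finset.univ.filter (fun u => g u = c), e u :=
            fun c => sum_fiber g c (Enc c) (hEncInj c) (hEncg c) (hEncSurj c) e
          have h2 : ∑ c : C, ∑ u ∈ Finset.univ.filter (fun u => g u = c), e u =
              ∑ u : U, e u := Finset.sum_fiberwise Finset.univ g e
          have h3 : (Fintype.card U : ℝ)⁻¹ =
              (Fintype.card C : ℝ)⁻¹ * (m : ℝ)⁻¹ := by
            rw [hcardU]
            push_cast
            rw [mul_inv]
            ring
          rw [h3, ← h2, Finset.mul_sum]
          refine Finset.sum_congr rfl fun c _ => ?_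
          rw [h1 c, mul_assoc]
      _ ≤ ∑ u : U, (Ptil u * e u + |Ptil u - (Fintype.card U : ℝ)⁻¹|) := by
          rw [Finset.mul_sum]
          refine Finset.sum_le_sum fun u _ => ?_
          have hstep : ((Fintype.card U : ℝ)⁻¹ - Ptil u) * e u ≤
              |Ptil u - (Fintype.card U : ℝ)⁻¹| := by
            calc ((Fintype.card U : ℝ)⁻¹ - Ptil u) * e u
                ≤ |(Fintype.card U : ℝ)⁻¹ - Ptil u| * e u :=
                  mul_le_mul_of_nonneg_right (le_abs_self _) (he0 u)
              _ ≤ |(Fintype.card U : ℝ)⁻¹ - Ptil u| * 1 :=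
                  mul_le_mul_of_nonneg_left (he1 u) (abs_nonneg _)
              _ = |Ptil u - (Fintype.card U : ℝ)⁻¹| := by rw [mul_one, abs_sub_comm]
          nlinarith [hstep]
      _ = (∑ u : U, Ptil u * e u) + ∑ u : U, |Ptil u - (Fintype.card U : ℝ)⁻¹| :=
          Finset.sum_add_distrib
      _ ≤ ε'' + ε' := add_le_add (hrel A hA) huni
      _ = ε' + ε'' := add_comm _ _
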